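/- Let p and p+2 both be odd primes and N = p(p+2). Let s be a binary sequence of period N whose support set is an (N, (N+1)/2, (N+1)/4) cyclic difference set, with circulant matrix A. Then gcd(2^N - 1, det(A)) = 1, and hence the 2-adic complexity of s equals N. -/

import Mathlib

open Matrix

/-- Any prime divisor of `2 ^ (p*(p+2)) - 1` does not divide `p + 1`,
when `p` and `p+2` are primes with `p` odd. -/
lemma aux_nt (p N q : ℕ) (hp : p.Prime) (hp2 : (p + 2).Prime) (hodd : Odd p) (hq : q.Prime)
    (hN : N = p * (p + 2)) (hdvd : (q : ℤ) ∣ 2 ^ N - 1) : ¬ q ∣ p + 1 := by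
  intro hq1
  haveI : Fact q.Prime := ⟨hq⟩
  obtain ⟨t, ht⟩ := hodd
  have hNpos : 0 < N := hN ▸ Nat.mul_pos hp.pos (by omega)
  -- q is odd
  have hq2 : q ≠ 2 := by
    rintro rfl
    have h1 : ((2:ℤ)) ∣ 2 ^ N - 1 := by exact_mod_cast hdvd
    have h2 : ((2:ℤ)) ∣ 2 ^ N := dvd_pow_self 2 hNpos.ne'
    have h3 : (2:ℤ) ∣ 1 := (dvd_sub_right h2).mp h1
    norm_num at h3
  -- q ≤ p since q odd divides even p+1
  have hqle : q ≤ p := by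
    have h1 : q ≤ p + 1 := Nat.le_of_dvd (by omega) hq1
    rcases Nat.lt_or_ge q (p+1) with h | h
    · omega
    · exfalso
      have hqe : q = p + 1 := le_antisymm h1 h
      have hev : Even q := ⟨t + 1, by omega⟩
      rw [hq.even_iff] at hev
      omega
  -- on the other hand q ≥ p + 1 since the order of 2 mod q divides both N and q - 1
  have h2N : (2 : ZMod q) ^ N = 1 := by
    have h0 : ((2 ^ N - 1 : ℤ) : ZMod q) = 0 := by
      rw [ZMod.intCast_zmod_eq_zero_iff_dvd]; exact hdvd
    push_cast at h0
    linear_combination h0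
  have h2ne : (2 : ZMod q) ≠ 0 := by
    intro h
    have h0 : ((2 : ℕ) : ZMod q) = 0 := by exact_mod_cast h
    rw [ZMod.natCast_eq_zero_iff] at h0
    exact hq2 ((Nat.prime_dvd_prime_iff_eq hq Nat.prime_two).mp h0)
  set d := orderOf (2 : ZMod q) with hd
  have hdN : d ∣ N := orderOf_dvd_of_pow_eq_one h2N
  have hdq : d ∣ q - 1 := orderOf_dvd_of_pow_eq_one (ZMod.pow_card_sub_one_eq_one h2ne)
  have hd1 : d ≠ 1 := by
    intro h
    have h21 : (2 : ZMod q) = 1 := orderOf_eq_one_iff.mp h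
    have : (1 : ZMod q) = 0 := by linear_combination h21
    exact one_ne_zero this
  set r := d.minFac with hr
  have hrp : r.Prime := Nat.minFac_prime hd1
  have hrN : r ∣ N := (Nat.minFac_dvd d).trans hdN
  have hrq : r ∣ q - 1 := (Nat.minFac_dvd d).trans hdq
  rw [hN] at hrN
  have hror : r = p ∨ r = p + 2 := by
    rcases (Nat.Prime.dvd_mul hrp).mp hrN with h | h
    · exact Or.inl ((Nat.prime_dvd_prime_iff_eq hrp hp).mp h)
    · exact Or.inr ((Nat.prime_dvd_prime_iff_eq hrp hp2).mp h)
  have hrle : r ≤ q - 1 := Nat.le_of_dvd (by have := hq.two_le; omega) hrq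
  have := hq.two_le
  have := hp.two_le
  omega

/-- The autocorrelation sum of a binary sequence counts the intersection with a shift. -/
lemma aux_sum_card (N : ℕ) [NeZero N] (s : ZMod N → ℤ) (hbin : ∀ i, s i = 0 ∨ s i = 1)
    (τ : ZMod N) :
    ∑ k : ZMod N, s k * s (k - τ) =
      (((Finset.univ.filter fun i : ZMod N => s i = 1) ∩
        ((Finset.univ.filter fun i : ZMod N => s i = 1)).image (· + τ)).card : ℤ) := by
  have h1 : ∀ k : ZMod N, s k * s (k - τ) = if s k = 1 ∧ s (k - τ) = 1 then 1 else 0 := by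
    intro k
    rcases hbin k with h | h <;> rcases hbin (k - τ) with h' | h' <;> simp [h, h']
  rw [Finset.sum_congr rfl fun k _ => h1 k, Finset.sum_boole]
  congr 2
  ext k
  simp only [Finset.mem_filter, Finset.mem_univ, true_and, Finset.mem_inter, Finset.mem_image]
  constructor
  · rintro ⟨h1, h2⟩
    exact ⟨h1, k - τ, h2, by ring⟩
  · rintro ⟨h1, a, ha, rfl⟩
    exact ⟨h1, by simpa using ha⟩

/-- Determinant squared of a matrix `A` with `A * Aᵀ = c • (1 + J)`. -/
lemma aux_det_sq (N : ℕ) [NeZero N] (c : ℤ) (A : Matrix (ZMod N) (ZMod N) ℤ)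
    (hAA : A * Aᵀ = c • (1 + Matrix.of fun _ _ : ZMod N => (1 : ℤ))) :
    A.det ^ 2 = c ^ N * (N + 1) := by
  have hJ : (Matrix.of fun _ _ : ZMod N => (1 : ℤ)) =
      replicateCol Unit (fun _ => (1:ℤ)) * replicateRow Unit (fun _ => (1:ℤ)) := by
    ext i j
    simp [mul_apply]
  have h5 := congrArg Matrix.det hAA
  rw [det_mul, det_transpose, det_smul, hJ, det_one_add_replicateCol_mul_replicateRow] at h5
  rw [sq, h5, ZMod.card]
  have hdp : ((fun _ : ZMod N => (1:ℤ)) ⬝ᵥ fun _ => 1) = (N : ℤ) := by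
    simp [dotProduct, Finset.card_univ, ZMod.card]
  rw [hdp]; ring

theorem stmt8 (p N : ℕ) (hp : p.Prime) (hp2 : (p + 2).Prime) (hodd : Odd p)
    (hN : N = p * (p + 2)) [NeZero N]
    (s : ZMod N → ℤ) (hbin : ∀ i, s i = 0 ∨ s i = 1)
    (hcard : (Finset.univ.filter fun i : ZMod N => s i = 1).card = (N + 1) / 2)
    (hdiff : ∀ τ : ZMod N, τ ≠ 0 →
      ((Finset.univ.filter fun i : ZMod N => s i = 1) ∩
        ((Finset.univ.filter fun i : ZMod N => s i = 1)).image (· + τ)).card = (N + 1) / 4) :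
    Int.gcd (2 ^ N - 1) (Matrix.circulant s).det = 1 ∧
    Int.gcd (∑ i ∈ Finset.range N, s (i : ZMod N) * 2 ^ i) (2 ^ N - 1) = 1 := by
  obtain ⟨t, ht⟩ := id hodd
  have hNpos : 0 < N := hN ▸ Nat.mul_pos hp.pos (by omega)
  have h4 : N + 1 = 4 * (t + 1) ^ 2 := by rw [hN, ht]; ring
  have hL2 : (N + 1) / 2 = 2 * (t + 1) ^ 2 := by omega
  have hL4 : (N + 1) / 4 = (t + 1) ^ 2 := by omega
  -- the matrix identity A Aᵀ = c (I + J)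
  have hAA : circulant s * (circulant s)ᵀ =
      (((t + 1) ^ 2 : ℕ) : ℤ) • (1 + Matrix.of fun _ _ : ZMod N => (1 : ℤ)) := by
    ext i j
    rw [mul_apply]
    simp only [transpose_apply, circulant_apply]
    have hre : ∑ k : ZMod N, s (i - k) * s (j - k) = ∑ m : ZMod N, s m * s (m - (i - j)) := by
      rw [← (Equiv.subLeft i).sum_comp (fun k => s (i - k) * s (j - k))]
      apply Finset.sum_congr rfl
      intro m _
      simp only [Equiv.subLeft_apply]
      rw [sub_sub_cancel, show j - (i - m) = m - (i - j) by abel]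
    rw [hre, aux_sum_card N s hbin (i - j)]
    by_cases hij : i = j
    · subst hij
      rw [sub_self]
      have himg : ((Finset.univ.filter fun i : ZMod N => s i = 1)).image (· + (0 : ZMod N)) =
          (Finset.univ.filter fun i : ZMod N => s i = 1) := by
        simp
      rw [himg, Finset.inter_self, hcard, hL2]
      simp [Matrix.smul_apply, Matrix.one_apply_eq]
      ring
    · rw [hdiff _ (sub_ne_zero_of_ne hij), hL4]
      simp [Matrix.smul_apply, Matrix.one_apply_ne hij]
  -- determinant squared
  have hdet2 : (circulant s).det ^ 2 = (((t + 1) ^ 2 : ℕ) : ℤ) ^ N * (N + 1) :=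
    aux_det_sq N _ _ hAA
  -- no prime divisor of 2^N - 1 divides det A
  have key : ∀ q : ℕ, q.Prime → (q : ℤ) ∣ 2 ^ N - 1 → ¬ (q : ℤ) ∣ (circulant s).det := by
    intro q hq hdvd hdet
    have h1 : (q : ℤ) ∣ (circulant s).det ^ 2 := dvd_pow hdet two_ne_zero
    rw [hdet2] at h1
    have h2 : (q : ℤ) ∣ (((t + 1) ^ (2 * N) * (N + 1) : ℕ) : ℤ) := by
      have he : (((t + 1) ^ 2 : ℕ) : ℤ) ^ N * (N + 1) =
          (((t + 1) ^ (2 * N) * (N + 1) : ℕ) : ℤ) := by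
        push_cast [pow_mul]
        ring
      rwa [he] at h1
    rw [Int.natCast_dvd_natCast] at h2
    have h3 : q ∣ p + 1 := by
      rcases (Nat.Prime.dvd_mul hq).mp h2 with h | h
      · have h5 : q ∣ t + 1 := hq.dvd_of_dvd_pow h
        have : p + 1 = 2 * (t + 1) := by omega
        rw [this]
        exact h5.mul_left 2
      · have h5 : q ∣ (p + 1) ^ 2 := by
          have : (p + 1) ^ 2 = N + 1 := by rw [hN]; ring
          rw [this]; exact h
        exact hq.dvd_of_dvd_pow h5
    exact aux_nt p N q hp hp2 hodd hq hN hdvd h3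
  have h2pos : (0 : ℤ) < 2 ^ N - 1 := by
    have : (2 : ℤ) ^ 1 ≤ 2 ^ N := pow_le_pow_right₀ (by norm_num) hNpos
    simp only [pow_one] at this; linarith
  constructor
  · -- first gcd
    by_contra hg
    have hgne0 : Int.gcd (2 ^ N - 1) (circulant s).det ≠ 0 := by
      intro h0
      rw [Int.gcd_eq_zero_iff] at h0
      omega
    set g := Int.gcd (2 ^ N - 1) (circulant s).det with hgdef
    set q := g.minFac with hqdef
    have hq : q.Prime := Nat.minFac_prime hg
    have hqg : (q : ℤ) ∣ (g : ℤ) := Int.natCast_dvd_natCast.mpr (Nat.minFac_dvd g)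
    exact key q hq (hqg.trans (Int.gcd_dvd_left _ _)) (hqg.trans (Int.gcd_dvd_right _ _))
  · -- second gcd, via the eigenvector of powers of 2
    by_contra hg
    have hgne0 : Int.gcd (∑ i ∈ Finset.range N, s (i : ZMod N) * 2 ^ i) (2 ^ N - 1) ≠ 0 := by
      intro h0
      rw [Int.gcd_eq_zero_iff] at h0
      omega
    set g := Int.gcd (∑ i ∈ Finset.range N, s (i : ZMod N) * 2 ^ i) (2 ^ N - 1) with hgdef
    set q := g.minFac with hqdef
    have hq : q.Prime := Nat.minFac_prime hg
    haveI : Fact q.Prime := ⟨hq⟩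
    have hqg : (q : ℤ) ∣ (g : ℤ) := Int.natCast_dvd_natCast.mpr (Nat.minFac_dvd g)
    have hdvd : (q : ℤ) ∣ 2 ^ N - 1 := hqg.trans (Int.gcd_dvd_right _ _)
    have hT : (q : ℤ) ∣ ∑ i ∈ Finset.range N, s (i : ZMod N) * 2 ^ i :=
      hqg.trans (Int.gcd_dvd_left _ _)
    have hdet := key q hq hdvd
    -- now work in ZMod q
    have h2N : (2 : ZMod q) ^ N = 1 := by
      have h0 : ((2 ^ N - 1 : ℤ) : ZMod q) = 0 := (ZMod.intCast_zmod_eq_zero_iff_dvd _ _).mpr hdvd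
      push_cast at h0
      linear_combination h0
    have hper : ∀ n : ℕ, (2 : ZMod q) ^ (n % N) = 2 ^ n := by
      intro n
      conv_rhs => rw [← Nat.div_add_mod n N]
      rw [pow_add, pow_mul, h2N, one_pow, one_mul]
    set B := (circulant s).map (Int.cast : ℤ → ZMod q) with hB
    have hBdet : B.det ≠ 0 := by
      have h1 : B.det = (((circulant s).det : ℤ) : ZMod q) := by
        rw [hB]; exact (RingHom.map_det (Int.castRingHom (ZMod q)) (circulant s)).symm
      rw [h1]
      intro h
      exact hdet ((ZMod.intCast_zmod_eq_zero_iff_dvd _ _).mp h)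
    set w : ZMod N → ZMod q := fun j => 2 ^ (-j).val with hw
    have hTsum : ∑ m : ZMod N, ((s m : ZMod q)) * 2 ^ m.val = 0 := by
      have h1 : ((∑ i ∈ Finset.range N, s (i : ZMod N) * 2 ^ i : ℤ) : ZMod q) = 0 :=
        (ZMod.intCast_zmod_eq_zero_iff_dvd _ _).mpr hT
      push_cast at h1
      rw [← h1]
      refine Finset.sum_nbij' (fun m : ZMod N => m.val) (fun i : ℕ => (i : ZMod N)) ?_ ?_ ?_ ?_ ?_
      · intro m _; exact Finset.mem_range.mpr (ZMod.val_lt m)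
      · intro i _; exact Finset.mem_univ _
      · intro m _; exact ZMod.natCast_rightInverse m
      · intro i hi; exact ZMod.val_cast_of_lt (Finset.mem_range.mp hi)
      · intro m _
        rw [ZMod.natCast_rightInverse m]
    have hmv : B *ᵥ w = 0 := by
      funext i
      show ∑ j, B i j * w j = 0
      rw [← (Equiv.subLeft i).sum_comp (fun j => B i j * w j)]
      have hterm : ∀ m : ZMod N, B i (i - m) * w (i - m) =
          ((s m : ZMod q)) * 2 ^ m.val * 2 ^ (-i).val := by
        intro m
        have hb : B i (i - m) = ((s m : ℤ) : ZMod q) := by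
          rw [hB, Matrix.map_apply, circulant_apply, sub_sub_cancel]
        have hwv : w (i - m) = 2 ^ m.val * 2 ^ (-i).val := by
          show (2 : ZMod q) ^ (-(i - m)).val = 2 ^ m.val * 2 ^ (-i).val
          have hneg : -(i - m) = m + (-i) := by abel
          rw [hneg, ZMod.val_add, hper, pow_add]
        rw [hb, hwv, mul_assoc]
      calc ∑ m : ZMod N, B i (i - m) * w (i - m)
          = ∑ m : ZMod N, ((s m : ZMod q)) * 2 ^ m.val * 2 ^ (-i).val := by
            exact Finset.sum_congr rfl fun m _ => by
              simpa [Equiv.subLeft_apply] using hterm m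
        _ = (∑ m : ZMod N, ((s m : ZMod q)) * 2 ^ m.val) * 2 ^ (-i).val := by
            rw [Finset.sum_mul]
        _ = 0 := by rw [hTsum, zero_mul]
    have hinj : Function.Injective B.mulVec :=
      mulVec_injective_iff_isUnit.mpr ((isUnit_iff_isUnit_det B).mpr (isUnit_iff_ne_zero.mpr hBdet))
    have hw0 : w = 0 := hinj (by rw [hmv, mulVec_zero])
    have h1 : w 0 = 1 := by simp [hw]
    rw [hw0] at h1
    simp at h1
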